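/- Let (W,w) be a Riesz fusion basis for a closed subspace W of H (i.e., its synthesis operator T_{W,w} is injective with range W) and let V be a closed subspace with H = V ⊕ W⊥. Then the family (π_{V,W⊥} S†_{W,w} W_i, w_i)_{i∈I} is a Riesz fusion basis for V, i.e., the synthesis operator of the images π_{V,W⊥}S†_{W,w}W_i is injective. -/

import Mathlib

open scoped ENNReal
set_option maxHeartbeats 1000000

lemma memLp_two_of_le {ι : Type*} {E F : ι → Type*} [∀ i, NormedAddCommGroup (E i)]
    [∀ i, NormedAddCommGroup (F i)] {g : ∀ i, F i} (hg : Memℓp g 2)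
    {f : ∀ i, E i} {C : ℝ} (hC : 0 ≤ C) (h : ∀ i, ‖f i‖ ≤ C * ‖g i‖) : Memℓp f 2 := by
  apply memℓp_gen
  have hs := hg.summable (by norm_num : (0:ℝ) < (2:ℝ≥0∞).toReal)
  refine Summable.of_nonneg_of_le (fun i => Real.rpow_nonneg (norm_nonneg _) _)
    (fun i => ?_) (hs.mul_left (C ^ (2:ℝ≥0∞).toReal))
  calc ‖f i‖ ^ (2:ℝ≥0∞).toReal ≤ (C * ‖g i‖) ^ (2:ℝ≥0∞).toReal :=
        Real.rpow_le_rpow (norm_nonneg _) (h i) (by norm_num)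
    _ = C ^ (2:ℝ≥0∞).toReal * ‖g i‖ ^ (2:ℝ≥0∞).toReal := Real.mul_rpow hC (norm_nonneg _)

theorem canonical_oblique_dual_of_riesz_fusion_basis_is_riesz
    {H : Type*} [NormedAddCommGroup H] [InnerProductSpace ℂ H] [CompleteSpace H]
    {I : Type*} (V W : Submodule ℂ H) [CompleteSpace V] [CompleteSpace W]
    (hcompl : IsCompl V Wᗮ)
    (Wi : I → Submodule ℂ H) [∀ i, CompleteSpace (Wi i)] (hWiW : ∀ i, Wi i ≤ W)
    (w : I → ℝ) (hw : ∀ i, 0 < w i)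
    (TW : lp (fun i => Wi i) 2 →L[ℂ] H)
    (hTW : ∀ c, HasSum (fun i => w i • (c i : H)) (TW c))
    (hTWinj : Function.Injective TW) (hTWrange : LinearMap.range (TW : lp (fun i => Wi i) 2 →ₗ[ℂ] H) = W)
    -- the oblique projection `π_{V,Wᗮ}`:
    (P : H →L[ℂ] H) (hPV : ∀ f ∈ V, P f = f) (hPW : ∀ f ∈ Wᗮ, P f = 0)
    -- `Sd` is the Moore–Penrose pseudoinverse of the frame operator `S = T_W T_W*`:
    (Sd : H →L[ℂ] H)
    (hS1 : ((TW.comp TW.adjoint).comp Sd).comp (TW.comp TW.adjoint) = TW.comp TW.adjoint)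
    (hS2 : (Sd.comp (TW.comp TW.adjoint)).comp Sd = Sd)
    (hS3 : ((TW.comp TW.adjoint).comp Sd).adjoint = (TW.comp TW.adjoint).comp Sd)
    (hS4 : (Sd.comp (TW.comp TW.adjoint)).adjoint = Sd.comp (TW.comp TW.adjoint))
    -- the image subspaces `V_i = π_{V,Wᗮ} S† W_i`:
    (Vi : I → Submodule ℂ H)
    (hVi : ∀ i, Vi i = (Wi i).map ((P.comp Sd : H →L[ℂ] H) : H →ₗ[ℂ] H))
    -- the synthesis operator of `(V_i, w_i)`:
    (TV : lp (fun i => Vi i) 2 →L[ℂ] H)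
    (hTV : ∀ c, HasSum (fun i => w i • (c i : H)) (TV c)) :
    Function.Injective TV ∧ LinearMap.range (TV : lp (fun i => Vi i) 2 →ₗ[ℂ] H) = V := by
  classical
  set S : H →L[ℂ] H := TW.comp TW.adjoint with hSdef
  set A : H →L[ℂ] H := P.comp Sd with hAdef
  have hSapp : ∀ x, S x = TW (TW.adjoint x) := fun _ => rfl
  have hAapp : ∀ x, A x = P (Sd x) := fun _ => rfl
  have hmemW : ∀ y, TW y ∈ W := by intro y; rw [← hTWrange]; exact ⟨y, rfl⟩
  -- kernel of S is Wᗮ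
  have hkerS : ∀ x, S x = 0 ↔ x ∈ Wᗮ := by
    intro x
    rw [hSapp]
    constructor
    · intro hx
      have h0 : TW.adjoint x = 0 := hTWinj (by simpa using hx)
      rw [Submodule.mem_orthogonal]
      intro u hu
      rw [← hTWrange] at hu
      obtain ⟨c, rfl⟩ := hu
      change (inner ℂ (TW c) x : ℂ) = 0
      rw [← ContinuousLinearMap.adjoint_inner_right TW, h0, inner_zero_right]
    · intro hx
      have h0 : TW.adjoint x = 0 := by
        have h1 : (inner ℂ (TW.adjoint x) (TW.adjoint x) : ℂ) = 0 := by
          rw [ContinuousLinearMap.adjoint_inner_left]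
          exact (Submodule.mem_orthogonal' _ _).1 hx _ (hmemW _)
        exact inner_self_eq_zero.mp h1
      rw [h0, map_zero]
  have hSsa : S.adjoint = S := by
    rw [hSdef, ContinuousLinearMap.adjoint_comp, ContinuousLinearMap.adjoint_adjoint]
  -- S ∘ S ∘ Sd = S
  have hSE : ∀ x, S (S (Sd x)) = S x := by
    have h1 : (S.comp (S.comp Sd)).adjoint = S := by
      rw [ContinuousLinearMap.adjoint_comp, hS3, hSsa]
      exact hS1
    have h2 : S.comp (S.comp Sd) = S := by
      rw [← ContinuousLinearMap.adjoint_adjoint (S.comp (S.comp Sd)), h1, hSsa]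
    intro x
    simpa using DFunLike.congr_fun h2 x
  -- S Sd fixes W
  have hE : ∀ x ∈ W, S (Sd x) = x := by
    intro x hx
    have hz : S (x - S (Sd x)) = 0 := by rw [map_sub, hSE, sub_self]
    have hWm : x - S (Sd x) ∈ W := sub_mem hx (by rw [hSapp]; exact hmemW _)
    have hWo : x - S (Sd x) ∈ Wᗮ := (hkerS _).1 hz
    have h0 : x - S (Sd x) = 0 :=
      inner_self_eq_zero.mp (((Submodule.mem_orthogonal _ _).1 hWo) _ hWm)
    exact (sub_eq_zero.mp h0).symm
  -- Sd S fixes W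
  have hF : ∀ x ∈ W, Sd (S x) = x := by
    intro x hx
    have h1 : ∀ y, S (Sd (S y)) = S y := by
      intro y; simpa using DFunLike.congr_fun hS1 y
    have hFz : Sd (S (x - Sd (S x))) = 0 := by
      rw [map_sub, map_sub, h1, sub_self]
    have hSz : S (x - Sd (S x)) = 0 := by
      rw [← h1 (x - Sd (S x)), hFz, map_zero]
    have hzo : x - Sd (S x) ∈ Wᗮ := (hkerS _).1 hSz
    have hxoo : x ∈ Wᗮᗮ := Submodule.le_orthogonal_orthogonal W hx
    have hFoo : Sd (S x) ∈ Wᗮᗮ := by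
      rw [Submodule.mem_orthogonal]
      intro u hu
      have hsu : Sd (S u) = 0 := by rw [(hkerS u).2 hu, map_zero]
      have h2 : (inner ℂ ((Sd.comp S).adjoint u) x : ℂ) = inner ℂ u ((Sd.comp S) x) :=
        ContinuousLinearMap.adjoint_inner_left _ _ _
      rw [hS4] at h2
      have h3 : ((Sd.comp S) u : H) = 0 := hsu
      rw [h3, inner_zero_left] at h2
      exact h2.symm
    have hzoo : x - Sd (S x) ∈ Wᗮᗮ := sub_mem hxoo hFoo
    have h0 : x - Sd (S x) = 0 :=
      inner_self_eq_zero.mp (((Submodule.mem_orthogonal _ _).1 hzoo) _ hzo)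
    exact (sub_eq_zero.mp h0).symm
  -- oblique projection facts
  have hPrange : ∀ f, P f ∈ V := by
    intro f
    have hf : f ∈ V ⊔ Wᗮ := by rw [hcompl.codisjoint.eq_top]; exact Submodule.mem_top
    obtain ⟨v, hv, u, hu, rfl⟩ := Submodule.mem_sup.mp hf
    rw [map_add, hPV v hv, hPW u hu, add_zero]
    exact hv
  have hPker : ∀ f, P f = 0 → f ∈ Wᗮ := by
    intro f h0
    have hf : f ∈ V ⊔ Wᗮ := by rw [hcompl.codisjoint.eq_top]; exact Submodule.mem_top
    obtain ⟨v, hv, u, hu, rfl⟩ := Submodule.mem_sup.mp hf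
    rw [map_add, hPV v hv, hPW u hu, add_zero] at h0
    rw [h0, zero_add]
    exact hu
  have hAV : ∀ f, A f ∈ V := fun f => hPrange (Sd f)
  -- the restricted operator W → V
  let AW : W →L[ℂ] V := (A.comp W.subtypeL).codRestrict V (fun x => hAV _)
  have hAWapp : ∀ x : W, (AW x : H) = A x := fun x => rfl
  have hAWker : LinearMap.ker (AW : W →ₗ[ℂ] V) = ⊥ := by
    rw [LinearMap.ker_eq_bot']
    intro x hx
    have h0 : A (x : H) = 0 := by rw [← hAWapp x, show AW x = 0 from hx]; rfl
    have h1 : Sd (x : H) ∈ Wᗮ := hPker _ h0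
    have h2 : S (Sd (x : H)) = 0 := (hkerS _).2 h1
    have h3 : (x : H) = 0 := by rw [← hE (x : H) x.2, h2]
    exact Subtype.ext h3
  have hAWrange : LinearMap.range (AW : W →ₗ[ℂ] V) = ⊤ := by
    rw [LinearMap.range_eq_top]
    intro v
    refine ⟨⟨S (v : H), by rw [hSapp]; exact hmemW _⟩, ?_⟩
    apply Subtype.ext
    rw [ContinuousLinearMap.coe_coe, hAWapp]
    show A (S (v : H)) = (v : H)
    set a := ((W.orthogonalProjectionOnto (v : H)) : H) with hadef
    have ha : a ∈ W := (W.orthogonalProjectionOnto (v : H)).2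
    have hb : (v : H) - a ∈ Wᗮ := Submodule.sub_starProjection_mem_orthogonal (K := W) (v : H)
    have hSv : S (v : H) = S a := by
      have h4 : S ((v : H) - a) = 0 := (hkerS _).2 hb
      rw [map_sub] at h4
      exact sub_eq_zero.mp h4
    rw [hAapp, hSv, hF a ha]
    have h5 : a = (v : H) - ((v : H) - a) := (sub_sub_cancel _ _).symm
    rw [h5, map_sub, hPW _ hb, sub_zero, hPV _ v.2]
  let eAW := ContinuousLinearEquiv.ofBijective AW hAWker hAWrange
  have heAW : ∀ x : W, eAW x = AW x := fun x => rfl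
  set C₀ := ‖(eAW.symm : V →L[ℂ] W)‖ with hC₀def
  have hC₀ : 0 ≤ C₀ := norm_nonneg _
  have hlow : ∀ x : W, ‖x‖ ≤ C₀ * ‖AW x‖ := by
    intro x
    calc ‖x‖ = ‖eAW.symm (AW x)‖ := by rw [← heAW, eAW.symm_apply_apply]
      _ ≤ C₀ * ‖AW x‖ := (eAW.symm : V →L[ℂ] W).le_opNorm _
  -- key lifting lemma
  have key : ∀ c : lp (fun i => Vi i) 2, ∃ b : lp (fun i => Wi i) 2,
      (∀ i, A ((b i : H)) = (c i : H)) ∧ TV c = A (TW b) := by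
    intro c
    have hmem : ∀ i, ∃ x, x ∈ Wi i ∧ A x = (c i : H) := by
      intro i
      have hgen : ∀ z : H, z ∈ Vi i → ∃ x, x ∈ Wi i ∧ A x = z := by
        intro z hz
        rw [hVi i] at hz
        obtain ⟨x, hx, hAx⟩ := hz
        exact ⟨x, hx, hAx⟩
      exact hgen _ (c i).2
    choose x hx1 hx2 using hmem
    have hxb : ∀ i, ‖x i‖ ≤ C₀ * ‖(c i : H)‖ := by
      intro i
      have h := hlow ⟨x i, hWiW i (hx1 i)⟩
      calc ‖x i‖ = ‖(⟨x i, hWiW i (hx1 i)⟩ : W)‖ := rfl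
        _ ≤ C₀ * ‖AW ⟨x i, hWiW i (hx1 i)⟩‖ := h
        _ = C₀ * ‖A (x i)‖ := rfl
        _ = C₀ * ‖(c i : H)‖ := by rw [hx2 i]
    have hb2 : Memℓp (fun i => (⟨x i, hx1 i⟩ : Wi i)) 2 :=
      memLp_two_of_le (lp.memℓp c) hC₀ (fun i => hxb i)
    set b : lp (fun i => Wi i) 2 := ⟨fun i => ⟨x i, hx1 i⟩, hb2⟩ with hbdef
    have hbi : ∀ i, (b i : H) = x i := fun i => rfl
    refine ⟨b, fun i => by rw [hbi, hx2], ?_⟩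
    have h1 := hTV c
    have h2 : HasSum (fun i => w i • (x i)) (TW b) := hTW b
    have h3 : HasSum (fun i => A (w i • x i)) (A (TW b)) := h2.mapL A
    have h4 : HasSum (fun i => w i • (c i : H)) (A (TW b)) := by
      have heq : (fun i => A (w i • x i)) = fun i => w i • (c i : H) := by
        funext i
        rw [A.map_smul_of_tower, hx2]
      rw [heq] at h3
      exact h3
    exact h1.unique h4
  constructor
  · -- injectivity
    have h0 : ∀ c, TV c = 0 → c = 0 := by
      intro c hc
      obtain ⟨b, hb1, hb2⟩ := key c
      rw [hc] at hb2
      have hTWb : TW b ∈ W := hmemW b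
      have h1 : Sd (TW b) ∈ Wᗮ := hPker _ (by rw [← hAapp]; exact hb2.symm)
      have h2 : S (Sd (TW b)) = 0 := (hkerS _).2 h1
      have h3 : TW b = 0 := by rw [← hE _ hTWb, h2]
      have h4 : b = 0 := hTWinj (by rw [h3, map_zero])
      have h5 : ∀ i, (c i : H) = 0 := by
        intro i
        rw [← hb1 i, h4]
        simp
      apply Subtype.ext
      funext i
      exact Subtype.ext (h5 i)
    intro c₁ c₂ h
    have := h0 (c₁ - c₂) (by rw [map_sub, h, sub_self])
    exact sub_eq_zero.mp this
  · -- range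
    apply le_antisymm
    · rintro v ⟨c, rfl⟩
      obtain ⟨b, hb1, hb2⟩ := key c
      show TV c ∈ V
      rw [hb2]
      exact hAV _
    · intro v hv
      set x : W := eAW.symm ⟨v, hv⟩ with hxdef
      have hx : (x : H) ∈ LinearMap.range (TW : lp (fun i => Wi i) 2 →ₗ[ℂ] H) := by rw [hTWrange]; exact x.2
      obtain ⟨b, hb⟩ := hx
      have hcmem : ∀ i, A ((b i : H)) ∈ Vi i := by
        intro i
        rw [hVi i]
        exact ⟨b i, (b i).2, rfl⟩
      have hc2 : Memℓp (fun i => (⟨A ((b i : H)), hcmem i⟩ : Vi i)) 2 :=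
        memLp_two_of_le (lp.memℓp b) (norm_nonneg A) (fun i => A.le_opNorm (b i))
      set c : lp (fun i => Vi i) 2 := ⟨fun i => ⟨A ((b i : H)), hcmem i⟩, hc2⟩ with hcdef
      refine ⟨c, ?_⟩
      have h1 := hTV c
      have h2 : HasSum (fun i => w i • ((b i : H))) (TW b) := hTW b
      have h3 : HasSum (fun i => A (w i • (b i : H))) (A (TW b)) := h2.mapL A
      have h4 : HasSum (fun i => w i • ((c i : H))) (A (TW b)) := by
        have heq : (fun i => A (w i • (b i : H))) = fun i => w i • ((c i : H)) := by
          funext i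
          rw [A.map_smul_of_tower]
        rw [heq] at h3
        exact h3
      have h5 : TV c = A (TW b) := h1.unique h4
      rw [ContinuousLinearMap.coe_coe, h5, show TW b = x from hb]
      have h6 : AW x = ⟨v, hv⟩ := by rw [← heAW]; exact eAW.apply_symm_apply _
      calc A (x : H) = (AW x : H) := rfl
        _ = v := by rw [h6]
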